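/- Define a graph on the 20 dryads where ab|cde and a'b'|c'd'e' are joined iff they lie in different A_5-orbits and their duads {a,b} and {a',b'} are disjoint. Then every dryad has exactly 3 neighbors; specifically ab|cde is joined exactly to dc|abe, ce|abd, and ed|abc. -/

import Mathlib

set_option maxRecDepth 20000

/-!
Statement 14: the graph on the 20 dryads, where two dryads are joined iff they
lie in different `A₅`-orbits and their duads are disjoint, is 3-regular;
explicitly, `ab|cde` is joined exactly to `dc|abe`, `ce|abd` and `ed|abc`.
A symbol `ab|cde` is encoded as a permutation `p : Fin 5 ≃ Fin 5` sending
positions to letters; its duad is `{p 0, p 1} = {a, b}`.  The three neighbours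
of the class of `p` are the classes of `p * τ₁`, `p * τ₂`, `p * τ₃`, where
`τ₁, τ₂, τ₃` are the position-permutations producing `dc|abe`, `ce|abd`,
`ed|abc`.
-/

/-- Cyclic permutation of the three positions after the bar: `(2 3 4)`. -/
def cyc : Equiv.Perm (Fin 5) := Equiv.swap 2 4 * Equiv.swap 2 3

/-- Transposition of the positions before the bar together with reversal of
the positions after the bar. -/
def rev : Equiv.Perm (Fin 5) := Equiv.swap 0 1 * Equiv.swap 2 4

/-- The group of equivalences among symbols. -/
def dryadGroup : Subgroup (Equiv.Perm (Fin 5)) := Subgroup.closure {cyc, rev}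

/-- A dryad: an equivalence class of symbols `ab|cde`. -/
abbrev Dryad : Type := Equiv.Perm (Fin 5) ⧸ dryadGroup

/-- Two dryads are related iff they lie in different `A₅`-orbits and their
duads are disjoint. -/
def dryadRel (x y : Dryad) : Prop :=
  x ∉ MulAction.orbit (alternatingGroup (Fin 5)) y ∧
  ∀ p q : Equiv.Perm (Fin 5),
    (QuotientGroup.mk p : Dryad) = x → (QuotientGroup.mk q : Dryad) = y →
    ({p 0, p 1} : Set (Fin 5)) ∩ {q 0, q 1} = ∅

/-- The graph on the 20 dryads. -/
def dryadGraph : SimpleGraph Dryad := SimpleGraph.fromRel dryadRel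

/-- Position permutation sending `ab|cde` to `dc|abe`. -/
def τ₁ : Equiv.Perm (Fin 5) := Equiv.swap 0 3 * Equiv.swap 3 1 * Equiv.swap 1 2

/-- Position permutation sending `ab|cde` to `ce|abd`. -/
def τ₂ : Equiv.Perm (Fin 5) := Equiv.swap 0 2 * (Equiv.swap 1 4 * Equiv.swap 4 3)

/-- Position permutation sending `ab|cde` to `ed|abc`. -/
def τ₃ : Equiv.Perm (Fin 5) := Equiv.swap 0 4 * Equiv.swap 4 2 * Equiv.swap 1 3

/-- The explicit predicate describing membership in `dryadGroup`: even
permutations preserving `{0, 1}` as a set. -/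
def Kpred (x : Equiv.Perm (Fin 5)) : Prop :=
  Equiv.Perm.sign x = 1 ∧ (x 0 = 0 ∨ x 0 = 1) ∧ (x 1 = 0 ∨ x 1 = 1)

instance : DecidablePred Kpred := fun x => by unfold Kpred; infer_instance

lemma kpred_one : Kpred 1 := by decide

lemma kpred_mul {a b : Equiv.Perm (Fin 5)} (ha : Kpred a) (hb : Kpred b) :
    Kpred (a * b) := by
  obtain ⟨hsa, ha0, ha1⟩ := ha
  obtain ⟨hsb, hb0, hb1⟩ := hb
  refine ⟨by rw [Equiv.Perm.sign_mul, hsa, hsb, one_mul], ?_, ?_⟩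
  · rcases hb0 with h | h <;> simp only [Equiv.Perm.mul_apply, h] <;> tauto
  · rcases hb1 with h | h <;> simp only [Equiv.Perm.mul_apply, h] <;> tauto

lemma kpred_inv {a : Equiv.Perm (Fin 5)} (ha : Kpred a) : Kpred a⁻¹ := by
  obtain ⟨hs, h0, h1⟩ := ha
  refine ⟨by rw [Equiv.Perm.sign_inv, hs], ?_⟩
  rcases h0 with h0 | h0 <;> rcases h1 with h1 | h1
  · exact absurd (a.injective (h0.trans h1.symm)) (by decide)
  · exact ⟨Or.inl (Equiv.Perm.inv_eq_iff_eq.mpr h0.symm),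
      Or.inr (Equiv.Perm.inv_eq_iff_eq.mpr h1.symm)⟩
  · exact ⟨Or.inr (Equiv.Perm.inv_eq_iff_eq.mpr h1.symm),
      Or.inl (Equiv.Perm.inv_eq_iff_eq.mpr h0.symm)⟩
  · exact absurd (a.injective (h0.trans h1.symm)) (by decide)

lemma kpred_enum : ∀ x : Equiv.Perm (Fin 5), Kpred x →
    x = 1 ∨ x = cyc ∨ x = cyc * cyc ∨ x = rev ∨ x = rev * cyc ∨ x = rev * cyc * cyc := by
  decide

lemma mem_dryadGroup_iff (x : Equiv.Perm (Fin 5)) : x ∈ dryadGroup ↔ Kpred x := by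
  constructor
  · intro hx
    refine Subgroup.closure_induction (p := fun g _ => Kpred g) ?_ kpred_one
      (fun a b _ _ ha hb => kpred_mul ha hb) (fun a _ ha => kpred_inv ha) hx
    rintro y (rfl | rfl) <;> decide
  · intro hx
    have hc : cyc ∈ dryadGroup := Subgroup.subset_closure (Set.mem_insert _ _)
    have hr : rev ∈ dryadGroup :=
      Subgroup.subset_closure (Set.mem_insert_of_mem _ rfl)
    rcases kpred_enum x hx with rfl | rfl | rfl | rfl | rfl | rfl
    · exact one_mem _
    · exact hc
    · exact mul_mem hc hc
    · exact hr
    · exact mul_mem hr hc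
    · exact mul_mem (mul_mem hr hc) hc

lemma mk_eq_iff {a b : Equiv.Perm (Fin 5)} :
    (QuotientGroup.mk a : Dryad) = QuotientGroup.mk b ↔ Kpred (a⁻¹ * b) :=
  QuotientGroup.eq.trans (mem_dryadGroup_iff _)

lemma sign_eq_of_mk_eq {a b : Equiv.Perm (Fin 5)}
    (h : (QuotientGroup.mk a : Dryad) = QuotientGroup.mk b) :
    Equiv.Perm.sign a = Equiv.Perm.sign b := by
  have hs := (mk_eq_iff.mp h).1
  rw [Equiv.Perm.sign_mul, Equiv.Perm.sign_inv] at hs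
  exact (mul_left_cancel (hs.trans (Int.units_mul_self _).symm)).symm

lemma duad_of_mk_eq {a p : Equiv.Perm (Fin 5)}
    (h : (QuotientGroup.mk p : Dryad) = QuotientGroup.mk a) :
    (p 0 = a 0 ∨ p 0 = a 1) ∧ (p 1 = a 0 ∨ p 1 = a 1) := by
  obtain ⟨-, h0, h1⟩ := mk_eq_iff.mp h.symm
  constructor
  · rcases h0 with h0 | h0 <;> [left; right] <;>
    · have := congrArg a h0
      simpa only [Equiv.Perm.mul_apply, Equiv.Perm.coe_inv, Equiv.apply_symm_apply] using this
  · rcases h1 with h1 | h1 <;> [left; right] <;>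
    · have := congrArg a h1
      simpa only [Equiv.Perm.mul_apply, Equiv.Perm.coe_inv, Equiv.apply_symm_apply] using this

lemma dryadRel_iff {a b : Equiv.Perm (Fin 5)} :
    dryadRel (QuotientGroup.mk a) (QuotientGroup.mk b) ↔
      Equiv.Perm.sign a ≠ Equiv.Perm.sign b ∧
        ({a 0, a 1} : Set (Fin 5)) ∩ {b 0, b 1} = ∅ := by
  constructor
  · rintro ⟨horb, hd⟩
    refine ⟨?_, hd a b rfl rfl⟩
    intro hs
    apply horb
    refine ⟨⟨a * b⁻¹, ?_⟩, ?_⟩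
    · rw [Equiv.Perm.mem_alternatingGroup, Equiv.Perm.sign_mul, Equiv.Perm.sign_inv,
        hs, Int.units_mul_self]
    · show (QuotientGroup.mk ((a * b⁻¹) * b) : Dryad) = QuotientGroup.mk a
      rw [inv_mul_cancel_right]
  · rintro ⟨hs, hd⟩
    constructor
    · rintro ⟨⟨g, hg⟩, h⟩
      have h' : (QuotientGroup.mk (g * b) : Dryad) = QuotientGroup.mk a := h
      have hsg := sign_eq_of_mk_eq h'
      rw [Equiv.Perm.sign_mul, Equiv.Perm.mem_alternatingGroup.mp hg, one_mul] at hsg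
      exact hs hsg.symm
    · intro p q hp hq
      obtain ⟨hp0, hp1⟩ := duad_of_mk_eq hp
      obtain ⟨hq0, hq1⟩ := duad_of_mk_eq hq
      have hpa : ∀ x, x ∈ ({p 0, p 1} : Set (Fin 5)) → x ∈ ({a 0, a 1} : Set (Fin 5)) := by
        intro x hx
        simp only [Set.mem_insert_iff, Set.mem_singleton_iff] at hx ⊢
        rcases hx with rfl | rfl
        · exact hp0
        · exact hp1
      have hqb : ∀ x, x ∈ ({q 0, q 1} : Set (Fin 5)) → x ∈ ({b 0, b 1} : Set (Fin 5)) := by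
        intro x hx
        simp only [Set.mem_insert_iff, Set.mem_singleton_iff] at hx ⊢
        rcases hx with rfl | rfl
        · exact hq0
        · exact hq1
      rw [Set.eq_empty_iff_forall_notMem] at hd ⊢
      rintro x ⟨h1, h2⟩
      exact hd x ⟨hpa x h1, hqb x h2⟩

lemma adj_iff {a b : Equiv.Perm (Fin 5)} :
    dryadGraph.Adj (QuotientGroup.mk a) (QuotientGroup.mk b) ↔
      Equiv.Perm.sign a ≠ Equiv.Perm.sign b ∧
        ({a 0, a 1} : Set (Fin 5)) ∩ {b 0, b 1} = ∅ := by
  rw [dryadGraph, SimpleGraph.fromRel_adj]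
  constructor
  · rintro ⟨hne, h | h⟩
    · exact dryadRel_iff.mp h
    · obtain ⟨hs, hd⟩ := dryadRel_iff.mp h
      exact ⟨hs.symm, by rw [Set.inter_comm]; exact hd⟩
  · rintro ⟨hs, hd⟩
    exact ⟨fun h => hs (sign_eq_of_mk_eq h), Or.inl (dryadRel_iff.mpr ⟨hs, hd⟩)⟩

lemma mk_eq_of_tau {p q : Equiv.Perm (Fin 5)} (τ : Equiv.Perm (Fin 5))
    (hτ : Equiv.Perm.sign τ = -1)
    (hs : Equiv.Perm.sign p ≠ Equiv.Perm.sign q)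
    (h0 : τ⁻¹ (p⁻¹ (q 0)) = 0 ∨ τ⁻¹ (p⁻¹ (q 0)) = 1)
    (h1 : τ⁻¹ (p⁻¹ (q 1)) = 0 ∨ τ⁻¹ (p⁻¹ (q 1)) = 1) :
    (QuotientGroup.mk q : Dryad) = QuotientGroup.mk (p * τ) := by
  symm
  rw [mk_eq_iff]
  have e : ∀ x : Fin 5, ((p * τ)⁻¹ * q) x = τ⁻¹ (p⁻¹ (q x)) := by
    intro x
    simp only [mul_inv_rev, Equiv.Perm.mul_apply]
  refine ⟨?_, by rw [e 0]; exact h0, by rw [e 1]; exact h1⟩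
  rw [Equiv.Perm.sign_mul, Equiv.Perm.sign_inv, Equiv.Perm.sign_mul, hτ]
  rcases Int.units_eq_one_or (Equiv.Perm.sign p) with h | h <;>
    rcases Int.units_eq_one_or (Equiv.Perm.sign q) with h' | h' <;>
      rw [h, h'] at hs ⊢ <;> first | exact absurd rfl hs | decide

lemma duad_disj (p : Equiv.Perm (Fin 5)) {i j x y : Fin 5}
    (hx : x = p i ∨ x = p j) (hy : y = p i ∨ y = p j)
    (hi : i ≠ 0 ∧ i ≠ 1) (hj : j ≠ 0 ∧ j ≠ 1) :
    ({p 0, p 1} : Set (Fin 5)) ∩ {x, y} = ∅ := by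
  rw [Set.eq_empty_iff_forall_notMem]
  rintro z ⟨hz1, hz2⟩
  simp only [Set.mem_insert_iff, Set.mem_singleton_iff] at hz1 hz2
  have hz : z = p i ∨ z = p j := by
    rcases hz2 with rfl | rfl
    · exact hx
    · exact hy
  rcases hz1 with rfl | rfl <;> rcases hz with h | h
  · exact hi.1 (p.injective h).symm
  · exact hj.1 (p.injective h).symm
  · exact hi.2 (p.injective h).symm
  · exact hj.2 (p.injective h).symm

lemma sign_ne_tau (p τ : Equiv.Perm (Fin 5)) (hτ : Equiv.Perm.sign τ = -1) :
    Equiv.Perm.sign p ≠ Equiv.Perm.sign (p * τ) := by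
  rw [Equiv.Perm.sign_mul, hτ]
  rcases Int.units_eq_one_or (Equiv.Perm.sign p) with h | h <;> rw [h] <;> decide

theorem dryad_graph_is_three_regular (p : Equiv.Perm (Fin 5)) :
    dryadGraph.neighborSet (QuotientGroup.mk p) =
      ({QuotientGroup.mk (p * τ₁), QuotientGroup.mk (p * τ₂),
        QuotientGroup.mk (p * τ₃)} : Set Dryad) ∧
    (dryadGraph.neighborSet (QuotientGroup.mk p)).ncard = 3 := by
  have hτ1 : Equiv.Perm.sign τ₁ = -1 := by decide
  have hτ2 : Equiv.Perm.sign τ₂ = -1 := by decide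
  have hτ3 : Equiv.Perm.sign τ₃ = -1 := by decide
  have hset : dryadGraph.neighborSet (QuotientGroup.mk p) =
      ({QuotientGroup.mk (p * τ₁), QuotientGroup.mk (p * τ₂),
        QuotientGroup.mk (p * τ₃)} : Set Dryad) := by
    ext y
    obtain ⟨q, rfl⟩ := QuotientGroup.mk_surjective y
    simp only [SimpleGraph.mem_neighborSet, Set.mem_insert_iff, Set.mem_singleton_iff]
    rw [adj_iff]
    constructor
    · rintro ⟨hs, hd⟩
      rw [Set.eq_empty_iff_forall_notMem] at hd
      have hq0 : q 0 ≠ p 0 ∧ q 0 ≠ p 1 := by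
        constructor <;> intro h <;>
          [exact hd (p 0) ⟨by simp, by simp [← h]⟩;
           exact hd (p 1) ⟨by simp, by simp [← h]⟩]
      have hq1 : q 1 ≠ p 0 ∧ q 1 ≠ p 1 := by
        constructor <;> intro h <;>
          [exact hd (p 0) ⟨by simp, by simp [← h]⟩;
           exact hd (p 1) ⟨by simp, by simp [← h]⟩]
      have hi : ∀ k : Fin 5, k ≠ 0 → k ≠ 1 → k = 2 ∨ k = 3 ∨ k = 4 := by decide
      have hne : ∀ z : Fin 5, ∀ w : Fin 5, q z ≠ p w → p⁻¹ (q z) ≠ w := by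
        intro z w h hcon
        exact h (by rw [← hcon, Equiv.Perm.coe_inv, Equiv.apply_symm_apply])
      have hij : p⁻¹ (q 0) ≠ p⁻¹ (q 1) := by
        intro h
        have h' : q 0 = q 1 := (Equiv.injective p⁻¹) h
        exact absurd (q.injective h') (by decide)
      rcases hi _ (hne 0 0 hq0.1) (hne 0 1 hq0.2) with h0 | h0 | h0 <;>
        rcases hi _ (hne 1 0 hq1.1) (hne 1 1 hq1.2) with h1 | h1 | h1
      · exact absurd (h0.trans h1.symm) hij
      · exact Or.inl (mk_eq_of_tau τ₁ hτ1 hs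
          (Or.inr (by rw [h0]; decide)) (Or.inl (by rw [h1]; decide)))
      · exact Or.inr (Or.inl (mk_eq_of_tau τ₂ hτ2 hs
          (Or.inl (by rw [h0]; decide)) (Or.inr (by rw [h1]; decide))))
      · exact Or.inl (mk_eq_of_tau τ₁ hτ1 hs
          (Or.inl (by rw [h0]; decide)) (Or.inr (by rw [h1]; decide)))
      · exact absurd (h0.trans h1.symm) hij
      · exact Or.inr (Or.inr (mk_eq_of_tau τ₃ hτ3 hs
          (Or.inr (by rw [h0]; decide)) (Or.inl (by rw [h1]; decide))))
      · exact Or.inr (Or.inl (mk_eq_of_tau τ₂ hτ2 hs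
          (Or.inr (by rw [h0]; decide)) (Or.inl (by rw [h1]; decide))))
      · exact Or.inr (Or.inr (mk_eq_of_tau τ₃ hτ3 hs
          (Or.inl (by rw [h0]; decide)) (Or.inr (by rw [h1]; decide))))
      · exact absurd (h0.trans h1.symm) hij
    · rintro (h | h | h)
      · obtain ⟨h0, h1⟩ := duad_of_mk_eq h
        refine ⟨by rw [sign_eq_of_mk_eq h]; exact sign_ne_tau p τ₁ hτ1, ?_⟩
        have e0 : (p * τ₁) 0 = p 3 := by rw [Equiv.Perm.mul_apply, (by decide : τ₁ 0 = 3)]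
        have e1 : (p * τ₁) 1 = p 2 := by rw [Equiv.Perm.mul_apply, (by decide : τ₁ 1 = 2)]
        rw [e0, e1] at h0 h1
        exact duad_disj p h0 h1 (by decide) (by decide)
      · obtain ⟨h0, h1⟩ := duad_of_mk_eq h
        refine ⟨by rw [sign_eq_of_mk_eq h]; exact sign_ne_tau p τ₂ hτ2, ?_⟩
        have e0 : (p * τ₂) 0 = p 2 := by rw [Equiv.Perm.mul_apply, (by decide : τ₂ 0 = 2)]
        have e1 : (p * τ₂) 1 = p 4 := by rw [Equiv.Perm.mul_apply, (by decide : τ₂ 1 = 4)]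
        rw [e0, e1] at h0 h1
        exact duad_disj p h0 h1 (by decide) (by decide)
      · obtain ⟨h0, h1⟩ := duad_of_mk_eq h
        refine ⟨by rw [sign_eq_of_mk_eq h]; exact sign_ne_tau p τ₃ hτ3, ?_⟩
        have e0 : (p * τ₃) 0 = p 4 := by rw [Equiv.Perm.mul_apply, (by decide : τ₃ 0 = 4)]
        have e1 : (p * τ₃) 1 = p 3 := by rw [Equiv.Perm.mul_apply, (by decide : τ₃ 1 = 3)]
        rw [e0, e1] at h0 h1
        exact duad_disj p h0 h1 (by decide) (by decide)
  refine ⟨hset, ?_⟩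
  have key : ∀ σ σ' : Equiv.Perm (Fin 5), ¬ Kpred (σ⁻¹ * σ') →
      (QuotientGroup.mk (p * σ) : Dryad) ≠ QuotientGroup.mk (p * σ') := by
    intro σ σ' hK h
    apply hK
    have := mk_eq_iff.mp h
    have e : (p * σ)⁻¹ * (p * σ') = σ⁻¹ * σ' := by group
    rwa [e] at this
  have d12 := key τ₁ τ₂ (by decide)
  have d13 := key τ₁ τ₃ (by decide)
  have d23 := key τ₂ τ₃ (by decide)
  rw [hset, Set.ncard_insert_of_notMem (by simp [d12, d13])
    ((Set.finite_singleton _).insert _), Set.ncard_pair d23]
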